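/- Suppose (f,g) ∈ 𝒞 has a hiding region 𝒦 ⊆ [0,1]. Then the forward orbit of 0 under the semigroup generated by f and g is disjoint from 𝒦. Consequently, the unique minimal set M of ⟨f,g⟩₊ satisfies M ∩ int(𝒦) = ∅; in particular, M is not equal to [0,1]. -/

import Mathlib

def unitI : Set ℝ := Set.Icc 0 1

def memC (f g : ℝ → ℝ) : Prop :=
  ContinuousOn f unitI ∧ ContinuousOn g unitI ∧
  Set.MapsTo f unitI unitI ∧ Set.MapsTo g unitI unitI ∧
  f 0 = 0 ∧ g 1 = 1 ∧
  (∀ x ∈ unitI, x ≠ 0 → 0 < f x ∧ f x < x) ∧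
  (∀ x ∈ unitI, x ≠ 1 → x < g x ∧ g x < 1) ∧
  StrictMonoOn f unitI ∧ StrictMonoOn g unitI

def orbit (f g : ℝ → ℝ) (x : ℝ) : Set ℝ :=
  { y | ∃ w : List (ℝ → ℝ), w ≠ [] ∧ (∀ h ∈ w, h = f ∨ h = g) ∧
        y = w.foldl (fun a h => h a) x }

def IsRegion (K : Set ℝ) : Prop :=
  ∃ S : Finset (ℝ × ℝ), S.Nonempty ∧ (∀ p ∈ S, p.1 < p.2) ∧
    (∀ p ∈ S, ∀ q ∈ S, p ≠ q → Disjoint (Set.Icc p.1 p.2) (Set.Icc q.1 q.2)) ∧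
    K = ⋃ p ∈ S, Set.Icc p.1 p.2

def IsHidingRegion (f g : ℝ → ℝ) (K : Set ℝ) : Prop :=
  IsRegion K ∧ K ⊆ unitI ∧ K ≠ unitI ∧
  K ∩ f '' unitI ⊆ f '' K ∧ K ∩ g '' unitI ⊆ g '' K

def IsMinimalSet (f g : ℝ → ℝ) (M : Set ℝ) : Prop :=
  M.Nonempty ∧ M ⊆ unitI ∧ ∀ x ∈ M, closure (orbit f g x) = M

-- auxiliary lemmas

lemma zero_mem_unitI : (0:ℝ) ∈ unitI := ⟨le_refl 0, zero_le_one⟩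

lemma step_out {f g : ℝ → ℝ} {K : Set ℝ} (h : memC f g) (hK : IsHidingRegion f g K) :
    ∀ x ∈ unitI, x ∉ K → (f x ∈ unitI ∧ f x ∉ K) ∧ (g x ∈ unitI ∧ g x ∉ K) := by
  obtain ⟨hfc, hgc, hfm, hgm, hf0, hg1, hfx, hgx, hfs, hgs⟩ := h
  intro x hx hxK
  refine ⟨⟨hfm hx, ?_⟩, ⟨hgm hx, ?_⟩⟩
  · intro hfK
    obtain ⟨k, hk, hkx⟩ := hK.2.2.2.1 ⟨hfK, ⟨x, hx, rfl⟩⟩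
    exact hxK ((hfs.injOn (hK.2.1 hk) hx hkx) ▸ hk)
  · intro hgK
    obtain ⟨k, hk, hkx⟩ := hK.2.2.2.2 ⟨hgK, ⟨x, hx, rfl⟩⟩
    exact hxK ((hgs.injOn (hK.2.1 hk) hx hkx) ▸ hk)

lemma zero_not_mem {f g : ℝ → ℝ} {K : Set ℝ} (h : memC f g) (hK : IsHidingRegion f g K) :
    (0:ℝ) ∉ K := by
  obtain ⟨hfc, hgc, hfm, hgm, hf0, hg1, hfx, hgx, hfs, hgs⟩ := h
  obtain ⟨hreg, hKI, hKne, hKf, hKg⟩ := hK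
  obtain ⟨S, hSne, hlt, hdisj, hKeq⟩ := hreg
  intro h0
  have h0' := h0
  rw [hKeq] at h0'
  simp only [Set.mem_iUnion] at h0'
  obtain ⟨p, hpS, hp0⟩ := h0'
  have hsub : Set.Icc p.1 p.2 ⊆ K := by
    rw [hKeq]; intro t ht; exact Set.mem_biUnion hpS ht
  have hp1 : p.1 = 0 :=
    le_antisymm hp0.1 (hKI (hsub ⟨le_refl _, (hlt p hpS).le⟩)).1
  set a := p.2 with ha
  have ha0 : 0 < a := hp1 ▸ hlt p hpS
  have haK : a ∈ K := hsub ⟨hp1 ▸ ha0.le, le_refl _⟩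
  have ha1 : a ≤ 1 := (hKI haK).2
  rcases eq_or_lt_of_le ha1 with h1 | h1
  · -- a = 1 forces K = unitI
    apply hKne
    refine le_antisymm hKI ?_
    intro t ht
    exact hsub (by rw [hp1, h1]; exact ht)
  · -- a < 1
    -- other components form a closed set not containing a
    set K' : Set ℝ := ⋃ q ∈ S.erase p, Set.Icc q.1 q.2 with hK'
    have hK'closed : IsClosed K' := by
      apply Set.Finite.isClosed_biUnion (S.erase p).finite_toSet
      intro q _; exact isClosed_Icc
    have haK' : a ∉ K' := by
      intro haK'
      simp only [hK', Set.mem_iUnion] at haK'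
      obtain ⟨q, hqS, haq⟩ := haK'
      have hqS' := Finset.mem_erase.mp hqS
      exact Set.disjoint_left.mp (hdisj p hpS q hqS'.2 (Ne.symm hqS'.1))
        ⟨hp1 ▸ ha0.le, le_refl _⟩ haq
    obtain ⟨ε, hε, hball⟩ := Metric.isOpen_iff.mp hK'closed.isOpen_compl a haK'
    -- continuity of f at a within unitI
    have haI : a ∈ unitI := ⟨ha0.le, ha1⟩
    have hfa : f a < a := (hfx a haI ha0.ne').2
    have hcw : ContinuousWithinAt f unitI a := hfc a haI
    rw [Metric.continuousWithinAt_iff] at hcw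
    obtain ⟨δ, hδ, hδ'⟩ := hcw (a - f a) (by linarith)
    set m : ℝ := min δ (min ε (1 - a)) with hm
    have hm0 : 0 < m := by
      apply lt_min hδ (lt_min hε (by linarith))
    set x : ℝ := a + m / 2 with hxdef
    have hxa : a < x := by simp [hxdef]; linarith
    have hx1 : x ≤ 1 := by
      have : m ≤ 1 - a := le_trans (min_le_right _ _) (min_le_right _ _)
      simp only [hxdef]; linarith
    have hxI : x ∈ unitI := ⟨le_of_lt (lt_of_le_of_lt ha0.le hxa), hx1⟩
    have hdxa : dist x a < m := by
      rw [Real.dist_eq]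
      simp only [hxdef]
      rw [abs_of_pos (by linarith)]
      linarith
    -- x ∉ K
    have hxK : x ∉ K := by
      rw [hKeq]
      simp only [Set.mem_iUnion]
      rintro ⟨q, hqS, hxq⟩
      rcases eq_or_ne q p with rfl | hqp
      · exact absurd hxq.2 (not_le.mpr hxa)
      · have : x ∈ K' := by
          simp only [hK', Set.mem_iUnion]
          exact ⟨q, Finset.mem_erase.mpr ⟨hqp, hqS⟩, hxq⟩
        exact hball (lt_of_lt_of_le hdxa (le_trans (min_le_right _ _) (min_le_left _ _))) this
    -- f x ∈ K
    have hfxK : f x ∈ K := by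
      have hdx : dist x a < δ := lt_of_lt_of_le hdxa (min_le_left _ _)
      have := hδ' hxI hdx
      rw [Real.dist_eq] at this
      have hfxa : f x < a := by
        have := abs_lt.mp this
        linarith
      have hfx0 : 0 < f x := (hfx x hxI (by linarith)).1
      exact hsub ⟨hp1 ▸ hfx0.le, hfxa.le⟩
    obtain ⟨k, hk, hkx⟩ := hKf ⟨hfxK, ⟨x, hxI, rfl⟩⟩
    exact hxK ((hfs.injOn (hKI hk) hxI hkx) ▸ hk)

lemma orbit_avoid {f g : ℝ → ℝ} {K : Set ℝ} (h : memC f g) (hK : IsHidingRegion f g K) :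
    ∀ w : List (ℝ → ℝ), (∀ h' ∈ w, h' = f ∨ h' = g) → ∀ x ∈ unitI, x ∉ K →
      w.foldl (fun a h => h a) x ∈ unitI ∧ w.foldl (fun a h => h a) x ∉ K := by
  intro w
  induction w with
  | nil => intro _ x hx hxK; exact ⟨hx, hxK⟩
  | cons hd tl ih =>
    intro hw x hx hxK
    have step := step_out h hK x hx hxK
    have htl : ∀ h' ∈ tl, h' = f ∨ h' = g := fun h' hh' => hw h' (List.mem_cons_of_mem _ hh')
    rcases hw hd (List.mem_cons_self) with rfl | rfl
    · simpa using ih htl _ step.1.1 step.1.2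
    · simpa using ih htl _ step.2.1 step.2.2

lemma foldl_replicate (f : ℝ → ℝ) : ∀ (n : ℕ) (x : ℝ),
    (List.replicate n f).foldl (fun a h => h a) x = f^[n] x := by
  intro n
  induction n with
  | zero => intro x; simp
  | succ n ih =>
    intro x
    rw [List.replicate_succ, List.foldl_cons, ih, Function.iterate_succ_apply]

lemma zero_mem_closure_orbit {f g : ℝ → ℝ} (h : memC f g) {x : ℝ} (hx : x ∈ unitI) :
    (0:ℝ) ∈ closure (orbit f g x) := by
  obtain ⟨hfc, hgc, hfm, hgm, hf0, hg1, hfx, hgx, hfs, hgs⟩ := h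
  set u : ℕ → ℝ := fun n => f^[n] x with hu
  have huI : ∀ n, u n ∈ unitI := by
    intro n
    induction n with
    | zero => exact hx
    | succ n ih => show f^[n+1] x ∈ unitI; rw [Function.iterate_succ_apply']; exact hfm ih
  have hfle : ∀ y ∈ unitI, f y ≤ y := by
    intro y hy
    rcases eq_or_ne y 0 with rfl | hy0
    · exact hf0.le
    · exact (hfx y hy hy0).2.le
  have hanti : Antitone u := by
    apply antitone_nat_of_succ_le
    intro n
    rw [hu]
    simp only
    rw [Function.iterate_succ_apply']
    exact hfle _ (huI n)
  have hbdd : BddBelow (Set.range u) := ⟨0, by rintro _ ⟨n, rfl⟩; exact (huI n).1⟩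
  have hlim : Filter.Tendsto u Filter.atTop (nhds (⨅ n, u n)) :=
    tendsto_atTop_ciInf hanti hbdd
  set L : ℝ := ⨅ n, u n with hL
  have hLI : L ∈ unitI := isClosed_Icc.mem_of_tendsto hlim
    (Filter.Eventually.of_forall huI)
  have hfL : f L = L := by
    have h1 : Filter.Tendsto u Filter.atTop (nhdsWithin L unitI) := by
      rw [tendsto_nhdsWithin_iff]
      exact ⟨hlim, Filter.Eventually.of_forall huI⟩
    have h2 : Filter.Tendsto (fun n => f (u n)) Filter.atTop (nhds (f L)) :=
      (hfc L hLI).tendsto.comp h1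
    have h3 : (fun n => f (u n)) = fun n => u (n + 1) := by
      funext n
      rw [hu]
      simp only
      rw [Function.iterate_succ_apply']
    rw [h3] at h2
    have h4 : Filter.Tendsto (fun n => u (n + 1)) Filter.atTop (nhds L) :=
      hlim.comp (Filter.tendsto_add_atTop_nat 1)
    exact tendsto_nhds_unique h2 h4
  have hL0 : L = 0 := by
    by_contra hne
    exact absurd hfL (ne_of_lt (hfx L hLI hne).2)
  rw [hL0] at hlim
  apply mem_closure_of_tendsto (hlim.comp (Filter.tendsto_add_atTop_nat 1))
  apply Filter.Eventually.of_forall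
  intro n
  refine ⟨List.replicate (n + 1) f, by simp, ?_, ?_⟩
  · intro h' hh'
    exact Or.inl (List.eq_of_mem_replicate hh')
  · rw [foldl_replicate]
    rfl

theorem hiding_region_nonminimal (f g : ℝ → ℝ) (K : Set ℝ)
    (h : memC f g) (hK : IsHidingRegion f g K) :
    (∀ y ∈ orbit f g 0, y ∉ K) ∧
    (∀ M : Set ℝ, IsMinimalSet f g M → M ∩ interior K = ∅ ∧ M ≠ unitI) := by
  have h0K : (0:ℝ) ∉ K := zero_not_mem h hK
  have horb : ∀ y ∈ orbit f g 0, y ∉ K := by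
    rintro y ⟨w, hwne, hw, rfl⟩
    exact (orbit_avoid h hK w hw 0 zero_mem_unitI h0K).2
  refine ⟨horb, ?_⟩
  intro M hM
  obtain ⟨hMne, hMI, hMmin⟩ := hM
  obtain ⟨x, hxM⟩ := hMne
  have h0M : (0:ℝ) ∈ M := by
    rw [← hMmin x hxM]
    exact zero_mem_closure_orbit h (hMI hxM)
  have hMeq : M = closure (orbit f g 0) := (hMmin 0 h0M).symm
  have hMint : M ∩ interior K = ∅ := by
    rw [hMeq]
    rw [Set.eq_empty_iff_forall_notMem]
    rintro t ⟨htM, htK⟩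
    have hcl : closure (orbit f g 0) ⊆ (interior K)ᶜ := by
      apply closure_minimal
      · intro y hy
        exact fun hint => horb y hy (interior_subset hint)
      · exact isOpen_interior.isClosed_compl
    exact hcl htM htK
  refine ⟨hMint, ?_⟩
  intro hMu
  obtain ⟨S, hSne, hlt, hdisj, hKeq⟩ := hK.1
  obtain ⟨p, hpS⟩ := hSne
  set t : ℝ := (p.1 + p.2) / 2 with ht
  have htIoo : t ∈ Set.Ioo p.1 p.2 := ⟨by have := hlt p hpS; simp [ht]; linarith,
    by have := hlt p hpS; simp [ht]; linarith⟩
  have hIooK : Set.Ioo p.1 p.2 ⊆ K := by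
    intro s hs
    rw [hKeq]
    exact Set.mem_biUnion hpS (Set.Ioo_subset_Icc_self hs)
  have htint : t ∈ interior K := by
    rw [mem_interior]
    exact ⟨Set.Ioo p.1 p.2, hIooK, isOpen_Ioo, htIoo⟩
  have htM : t ∈ M := by
    rw [hMu]
    exact hK.2.1 (hIooK htIoo)
  rw [Set.eq_empty_iff_forall_notMem] at hMint
  exact hMint t ⟨htM, htint⟩
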